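/- Let τ(s) = Σ_{k=N}^∞ |s|^{k/(N-1)}/k! for an integer N ≥ 2, and let τ*(t) = sup_{s∈ℝ}(ts − τ(s)) be its convex conjugate. Then τ(2^{N-1} s) ≥ 2^N τ(s) for all s ∈ ℝ, and consequently τ*(2t) ≤ 2^N τ*(t) for all t ∈ ℝ. -/

import Mathlib

open Real

/-- The function `τ(s) = Σ_{k=N}^∞ |s|^{k/(N-1)}/k!`. -/
noncomputable def tauFun (N : ℕ) (s : ℝ) : ℝ :=
  ∑' k : ℕ, if N ≤ k then |s| ^ ((k : ℝ) / ((N : ℝ) - 1)) / (k.factorial : ℝ) else 0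

/-- The Legendre–Fenchel conjugate `τ*(t) = sup_s (t·s − τ(s))`, valued in `EReal`. -/
noncomputable def tauStar (N : ℕ) (t : ℝ) : EReal :=
  ⨆ s : ℝ, ((t * s - tauFun N s : ℝ) : EReal)

lemma tauFun_summable (N : ℕ) (s : ℝ) :
    Summable (fun k : ℕ =>
      if N ≤ k then |s| ^ ((k : ℝ) / ((N : ℝ) - 1)) / (k.factorial : ℝ) else 0) := by
  set x := |s| ^ ((1 : ℝ) / ((N : ℝ) - 1)) with hx
  have hx0 : 0 ≤ x := Real.rpow_nonneg (abs_nonneg s) _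
  refine Summable.of_nonneg_of_le (fun k => ?_) (fun k => ?_)
    (Real.summable_pow_div_factorial x)
  · split <;> positivity
  · split
    · have : |s| ^ ((k : ℝ) / ((N : ℝ) - 1)) = x ^ k := by
        rw [hx, ← Real.rpow_natCast (|s| ^ ((1:ℝ)/((N:ℝ)-1))) k,
          ← Real.rpow_mul (abs_nonneg s)]
        ring_nf
      rw [this]
    · positivity

theorem stmt0 (N : ℕ) (hN : 2 ≤ N) :
    (∀ s : ℝ, (2 : ℝ) ^ N * tauFun N s ≤ tauFun N ((2 : ℝ) ^ (N - 1) * s)) ∧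
    (∀ t : ℝ, tauStar N (2 * t) ≤ ((2 : ℝ) ^ N : EReal) * tauStar N t) := by
  have hN1 : ((N : ℝ) - 1) ≠ 0 := by
    have : (2 : ℝ) ≤ N := by exact_mod_cast hN
    nlinarith
  have hNcast : ((N - 1 : ℕ) : ℝ) = (N : ℝ) - 1 := by
    have : 1 ≤ N := le_trans one_le_two hN
    push_cast [Nat.cast_sub this]
    ring
  have key : ∀ s : ℝ, (2 : ℝ) ^ N * tauFun N s ≤ tauFun N ((2 : ℝ) ^ (N - 1) * s) := by
    intro s
    unfold tauFun
    rw [← tsum_mul_left]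
    refine Summable.tsum_le_tsum (fun k => ?_) ((tauFun_summable N s).mul_left _)
      (tauFun_summable N _)
    by_cases hk : N ≤ k
    · simp only [hk, if_true]
      have habs : |(2 : ℝ) ^ (N - 1) * s| = (2 : ℝ) ^ (N - 1) * |s| := by
        rw [abs_mul, abs_of_nonneg (by positivity)]
      rw [habs, Real.mul_rpow (by positivity) (abs_nonneg s)]
      have hfac : ((2 : ℝ) ^ (N - 1)) ^ ((k : ℝ) / ((N : ℝ) - 1)) = (2 : ℝ) ^ (k : ℝ) := by
        rw [← Real.rpow_natCast (2 : ℝ) (N - 1), ← Real.rpow_mul (by norm_num), hNcast,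
          mul_div_cancel₀ _ hN1]
      rw [hfac]
      have h2k : (2 : ℝ) ^ N ≤ (2 : ℝ) ^ (k : ℝ) := by
        rw [← Real.rpow_natCast (2 : ℝ) N]
        exact Real.rpow_le_rpow_left_iff (by norm_num) |>.mpr (by exact_mod_cast hk)
      rw [mul_div_assoc]
      exact mul_le_mul_of_nonneg_right h2k (by positivity)
    · simp [hk]
  refine ⟨key, fun t => ?_⟩
  unfold tauStar
  refine iSup_le (fun s => ?_)
  set u := s / (2 : ℝ) ^ (N - 1) with hu
  have hsu : s = (2 : ℝ) ^ (N - 1) * u := by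
    rw [hu]; field_simp
  have h1 : (2 * t) * s - tauFun N s ≤ (2 : ℝ) ^ N * (t * u - tauFun N u) := by
    rw [hsu]
    have := key u
    have h2N : (2 : ℝ) * (2 : ℝ) ^ (N - 1) = (2 : ℝ) ^ N := by
      rw [← pow_succ']
      congr 1
      omega
    have he : 2 * t * ((2:ℝ) ^ (N - 1) * u) = (2:ℝ) ^ N * (t * u) := by
      rw [← h2N]; ring
    rw [he, mul_sub]
    linarith [key u]
  calc ((2 * t * s - tauFun N s : ℝ) : EReal)
      ≤ (((2 : ℝ) ^ N * (t * u - tauFun N u) : ℝ) : EReal) := by exact_mod_cast h1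
    _ = ((2 : ℝ) ^ N : EReal) * ((t * u - tauFun N u : ℝ) : EReal) := by
        push_cast; rfl
    _ ≤ ((2 : ℝ) ^ N : EReal) * tauStar N t := by
        rw [← EReal.coe_pow]
        refine mul_le_mul_of_nonneg_left ?_ (EReal.coe_nonneg.mpr (by positivity))
        exact le_iSup (fun s : ℝ => ((t * s - tauFun N s : ℝ) : EReal)) u
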